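/- Let n ≥ 3 be an odd integer and set m = n−1. Then for each k ∈ {1,…,m/2} the series Σ_{r=1}^{∞} (∏_{ℓ=1}^{k−1}(r²−ℓ²))/r^{2n−3} of real numbers converges (the product over ℓ being the empty product 1 when k = 1), and (2n−1)·binom(2n−2, n−1)·Σ_{k=1}^{m/2} (2^k·c_{m,k}/((2k−1)!·k))·Σ_{r=1}^{∞} (∏_{ℓ=1}^{k−1}(r²−ℓ²))/r^{2n−3} = n·binom(2n, n)·Σ_{r=1}^{∞} 1/rⁿ. -/

import Mathlib

open scoped Classical

noncomputable section

/-- `c_{m,k} = Σ m!/((2p₁)!⋯(2p_k)!)` over all ordered `k`-tuples of positive integers with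
`2(p₁+⋯+p_k) = m`. -/
def cmk (m k : ℕ) : ℕ :=
  ∑ p ∈ (Finset.univ : Finset (Fin k → Fin (m + 1))).filter
      (fun p => (∀ i, 1 ≤ (p i : ℕ)) ∧ 2 * (∑ i, (p i : ℕ)) = m),
    m.factorial / ∏ i, (2 * (p i : ℕ)).factorial

namespace Stmt18aux
open PowerSeries Finset

def E : ℚ⟦X⟧ := exp ℚ
def E' : ℚ⟦X⟧ := rescale (-1) (exp ℚ)
def f : ℚ⟦X⟧ := C (R := ℚ) (1/2) * (E + E') - 1
def s : ℚ⟦X⟧ := C (R := ℚ) (1/2) * (E - E')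

lemma coeff_E (n : ℕ) : coeff (R := ℚ) n E = 1 / n.factorial := by
  simp [E, exp]

lemma coeff_E' (n : ℕ) : coeff (R := ℚ) n E' = (-1)^n / n.factorial := by
  simp [E', coeff_rescale, exp, div_eq_mul_inv, mul_comm]

lemma EE' : E * E' = 1 := by
  have h := exp_mul_exp_eq_exp_add (1 : ℚ) (-1)
  simp only [add_neg_cancel, rescale_zero] at h
  simp only [rescale_one, RingHom.id_apply, RingHom.comp_apply, constantCoeff_exp, map_one] at h
  rw [E, E', h]

lemma dE : d⁄dX ℚ E = E := by
  ext n
  rw [coeff_derivative, coeff_E, coeff_E]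
  rw [Nat.factorial_succ]
  have h : ((n:ℚ)+1) ≠ 0 := by positivity
  push_cast
  field_simp

lemma dE' : d⁄dX ℚ E' = -E' := by
  ext n
  rw [coeff_derivative, coeff_E', map_neg, coeff_E']
  rw [Nat.factorial_succ, pow_succ]
  push_cast
  field_simp

lemma df : d⁄dX ℚ f = s := by
  rw [f, s]
  rw [map_sub, Derivation.leibniz, map_add, dE, dE']
  simp [smul_eq_mul]
  ring

lemma ds : d⁄dX ℚ s = f + 1 := by
  rw [f, s]
  rw [Derivation.leibniz, map_sub, dE, dE']
  simp only [smul_eq_mul, derivative_C, mul_zero, zero_add, map_sub, map_add, map_one]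
  ring

lemma s_sq : s^2 = f^2 + 2*f := by
  have h1 : f + 1 + s = E := by
    rw [f, s]
    have : (C (R := ℚ)) (1/2) * 2 = 1 := by
      rw [← map_ofNat (C (R := ℚ)) 2, ← map_mul]
      norm_num
    linear_combination (E : ℚ⟦X⟧) * this
  have h2 : f + 1 - s = E' := by
    rw [f, s]
    have : (C (R := ℚ)) (1/2) * 2 = 1 := by
      rw [← map_ofNat (C (R := ℚ)) 2, ← map_mul]
      norm_num
    linear_combination (E' : ℚ⟦X⟧) * this
  have h := EE'
  rw [← h1, ← h2] at h
  linear_combination -h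

lemma dC (c : ℕ) (g : ℚ⟦X⟧) : d⁄dX ℚ ((c : ℚ⟦X⟧) * g) = (c : ℚ⟦X⟧) * d⁄dX ℚ g := by
  rw [Derivation.leibniz]
  rw [← map_natCast (C (R := ℚ)) c, derivative_C]
  simp [smul_eq_mul]

lemma dpow (k : ℕ) : d⁄dX ℚ (f ^ (k+1)) = ((k:ℚ⟦X⟧) + 1) * f ^ k * s := by
  induction k with
  | zero => simp [df]
  | succ j ih =>
    have : f ^ (j+2) = f ^ (j+1) * f := by ring
    rw [this, Derivation.leibniz, ih, df]
    simp only [smul_eq_mul]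
    push_cast
    ring

lemma ode (k : ℕ) : d⁄dX ℚ (d⁄dX ℚ (f ^ (k+1)))
    = ((k:ℚ⟦X⟧)+1)^2 * f^(k+1) + ((k:ℚ⟦X⟧)+1)*(2*k+1) * f^k := by
  cases k with
  | zero => simp [df, ds]
  | succ j =>
    rw [dpow]
    have h1 : (((j+1:ℕ):ℚ⟦X⟧) + 1) * f ^ (j+1) * s = ((j+1+1 : ℕ) : ℚ⟦X⟧) * (f ^ (j+1) * s) := by
      push_cast; ring
    rw [h1, dC, Derivation.leibniz, dpow, ds]
    simp only [smul_eq_mul]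
    have h2 : f ^ (j+1) * (f+1) = f^(j+2) + f^(j+1) := by ring
    have h3 : f ^ j * s * s = f ^ j * (f^2 + 2*f) := by
      rw [← s_sq]; ring
    push_cast
    calc ((j:ℚ⟦X⟧)+1+1) * (f^(j+1) * (f+1) + s * (((j:ℚ⟦X⟧)+1) * f^j * s))
        = ((j:ℚ⟦X⟧)+1+1) * ((f^(j+2) + f^(j+1)) + ((j:ℚ⟦X⟧)+1) * (f^j * (s*s))) := by ring
      _ = ((j:ℚ⟦X⟧)+1+1) * ((f^(j+2) + f^(j+1)) + ((j:ℚ⟦X⟧)+1) * (f^j * (f^2+2*f))) := by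
          rw [← pow_two s, s_sq]
      _ = ((j:ℚ⟦X⟧)+1+1)^2 * f^(j+1+1) + ((j:ℚ⟦X⟧)+1+1)*(2*(j+1)+1) * f^(j+1) := by ring

lemma coeff_f (n : ℕ) :
    coeff (R := ℚ) n f = if Even n ∧ n ≠ 0 then (1:ℚ) / (n.factorial : ℚ) else 0 := by
  rw [f, map_sub, coeff_C_mul, map_add, coeff_E, coeff_E', coeff_one]
  have hf : ((n.factorial:ℚ)) ≠ 0 := by positivity
  rcases Nat.even_or_odd n with he | ho
  · rw [he.neg_one_pow]
    by_cases h0 : n = 0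
    · subst h0; norm_num
    · rw [if_neg h0, if_pos ⟨he, h0⟩]
      field_simp
      ring
  · have h0 : n ≠ 0 := by rintro rfl; simp at ho
    rw [ho.neg_one_pow, if_neg h0, if_neg (fun h => (Nat.not_even_iff_odd.mpr ho) h.1)]
    ring

lemma gamma_rec (m k : ℕ) :
    coeff (R := ℚ) (m+2) (f^(k+1)) * ((m:ℚ)+2) * ((m:ℚ)+1)
      = ((k:ℚ)+1)^2 * coeff (R := ℚ) m (f^(k+1)) + ((k:ℚ)+1)*(2*k+1) * coeff (R := ℚ) m (f^k) := by
  have h := congrArg (coeff (R := ℚ) m) (ode k)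
  rw [coeff_derivative, coeff_derivative] at h
  have h2 : ((k:ℚ⟦X⟧)+1)^2 * f^(k+1) + ((k:ℚ⟦X⟧)+1)*(2*(k:ℚ⟦X⟧)+1) * f^k
      = C (R := ℚ) (((k:ℚ)+1)^2) * f^(k+1) + C (R := ℚ) (((k:ℚ)+1)*(2*(k:ℚ)+1)) * f^k := by
    push_cast
    simp only [map_add, map_mul, map_pow, map_natCast, map_one, map_ofNat]
  rw [h2, map_add, coeff_C_mul, coeff_C_mul] at h
  rw [show m+1+1 = m+2 from rfl] at h
  push_cast at h
  linarith [h]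

def S (m k : ℕ) : Finset (Fin k → Fin (m+1)) :=
  (Finset.univ : Finset (Fin k → Fin (m + 1))).filter
      (fun p => (∀ i, 1 ≤ (p i : ℕ)) ∧ 2 * (∑ i, (p i : ℕ)) = m)

open Fin.NatCast in
lemma coeff_f_pow (m k : ℕ) :
    coeff (R := ℚ) m (f ^ k) = ∑ p ∈ S m k, ∏ i, (1:ℚ) / (((2 * (p i : ℕ)).factorial : ℕ) : ℚ) := by
  classical
  rw [coeff_pow]
  rw [← Finset.sum_filter_add_sum_filter_not (finsuppAntidiag (range k) m)
      (fun l => ∀ i ∈ range k, Even (l i) ∧ l i ≠ 0)]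
  have hbad : ∑ l ∈ (finsuppAntidiag (range k) m).filter
      (fun l => ¬ ∀ i ∈ range k, Even (l i) ∧ l i ≠ 0),
      ∏ i ∈ range k, coeff (R := ℚ) (l i) f = 0 := by
    apply Finset.sum_eq_zero
    intro l hl
    rw [Finset.mem_filter] at hl
    obtain ⟨i, hi, hcond⟩ : ∃ i ∈ range k, ¬(Even (l i) ∧ l i ≠ 0) := by
      by_contra hc
      push_neg at hc
      exact hl.2 (fun i hi => ⟨(hc i hi).1, (hc i hi).2⟩)
    exact Finset.prod_eq_zero hi (by rw [coeff_f, if_neg hcond])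
  rw [hbad, add_zero]
  apply Finset.sum_nbij'
    (i := fun (l : ℕ →₀ ℕ) => (fun i : Fin k => ((l (i:ℕ) / 2 : ℕ) : Fin (m+1))))
    (j := fun p => Finsupp.onFinset (range k)
      (fun j => if h : j < k then 2 * ((p ⟨j, h⟩ : ℕ)) else 0)
      (fun j hj => by
        rw [mem_range]
        by_contra h
        exact hj (dif_neg h)))
  · -- hi : forward map lands in S m k
    intro l hl
    rw [Finset.mem_filter] at hl
    obtain ⟨hmem, hgood⟩ := hl
    rw [mem_finsuppAntidiag] at hmem
    obtain ⟨hsum, hsupp⟩ := hmem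
    have hle : ∀ j ∈ range k, l j ≤ m := by
      intro j hj
      calc l j ≤ ∑ j ∈ range k, l j := Finset.single_le_sum (fun _ _ => Nat.zero_le _) hj
        _ = m := hsum
    have hval : ∀ i : Fin k, ((((l (i:ℕ) / 2 : ℕ) : Fin (m+1))) : ℕ) = l (i:ℕ) / 2 := by
      intro i
      apply Fin.val_cast_of_lt
      have := hle i (mem_range.mpr i.isLt)
      omega
    rw [S, Finset.mem_filter]
    refine ⟨Finset.mem_univ _, ?_, ?_⟩
    · intro i
      rw [hval]
      obtain ⟨hev, hne⟩ := hgood (i:ℕ) (mem_range.mpr i.isLt)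
      obtain ⟨t, ht⟩ := hev
      omega
    · have : ∑ i : Fin k, ((((l (i:ℕ) / 2 : ℕ) : Fin (m+1))) : ℕ)
          = ∑ j ∈ range k, l j / 2 := by
        rw [← Fin.sum_univ_eq_sum_range (fun j => l j / 2)]
        exact Finset.sum_congr rfl (fun i _ => hval i)
      rw [this, Finset.mul_sum]
      rw [← hsum]
      apply Finset.sum_congr rfl
      intro j hj
      obtain ⟨hev, hne⟩ := hgood j hj
      obtain ⟨t, ht⟩ := hev
      omega
  · -- hj : backward map lands in filtered antidiag
    intro p hp
    rw [S, Finset.mem_filter] at hp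
    obtain ⟨-, hpos, hsum⟩ := hp
    rw [Finset.mem_filter, mem_finsuppAntidiag]
    refine ⟨⟨?_, Finsupp.support_onFinset_subset⟩, ?_⟩
    · have : ∑ j ∈ range k, (if h : j < k then 2 * ((p ⟨j, h⟩ : ℕ)) else 0)
          = ∑ i : Fin k, 2 * (p i : ℕ) := by
        rw [← Fin.sum_univ_eq_sum_range (fun j => if h : j < k then 2 * ((p ⟨j, h⟩ : ℕ)) else 0)]
        apply Finset.sum_congr rfl
        intro i _
        rw [dif_pos i.isLt]
      show ∑ j ∈ range k, (if h : j < k then 2 * ((p ⟨j, h⟩ : ℕ)) else 0) = m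
      rw [this, ← Finset.mul_sum]
      exact hsum
    · intro j hj
      simp only [Finsupp.onFinset_apply]
      rw [mem_range] at hj
      rw [dif_pos hj]
      constructor
      · exact ⟨(p ⟨j, hj⟩ : ℕ), by ring⟩
      · have := hpos ⟨j, hj⟩
        omega
  · -- left inverse
    intro l hl
    rw [Finset.mem_filter] at hl
    obtain ⟨hmem, hgood⟩ := hl
    rw [mem_finsuppAntidiag] at hmem
    obtain ⟨hsum, hsupp⟩ := hmem
    have hle : ∀ j ∈ range k, l j ≤ m := by
      intro j hj
      calc l j ≤ ∑ j ∈ range k, l j := Finset.single_le_sum (fun _ _ => Nat.zero_le _) hj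
        _ = m := hsum
    ext j
    simp only [Finsupp.onFinset_apply]
    by_cases h : j < k
    · rw [dif_pos h]
      have hval : ((((l j / 2 : ℕ) : Fin (m+1))) : ℕ) = l j / 2 := by
        apply Fin.val_cast_of_lt
        have := hle j (mem_range.mpr h)
        omega
      rw [hval]
      obtain ⟨hev, hne⟩ := hgood j (mem_range.mpr h)
      obtain ⟨t, ht⟩ := hev
      omega
    · rw [dif_neg h]
      by_contra hne
      have : j ∈ l.support := Finsupp.mem_support_iff.mpr (fun hc => hne hc.symm)
      have := hsupp this
      rw [mem_range] at this
      exact h this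
  · -- right inverse
    intro p hp
    funext i
    simp only [Finsupp.onFinset_apply]
    rw [dif_pos i.isLt]
    have : (2 * ((p ⟨(i:ℕ), i.isLt⟩ : ℕ))) / 2 = (p i : ℕ) := by
      rw [Fin.eta]
      omega
    rw [this, Fin.cast_val_eq_self]
  · -- values agree
    intro l hl
    rw [Finset.mem_filter] at hl
    obtain ⟨hmem, hgood⟩ := hl
    rw [mem_finsuppAntidiag] at hmem
    obtain ⟨hsum, hsupp⟩ := hmem
    have hle : ∀ j ∈ range k, l j ≤ m := by
      intro j hj
      calc l j ≤ ∑ j ∈ range k, l j := Finset.single_le_sum (fun _ _ => Nat.zero_le _) hj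
        _ = m := hsum
    rw [← Fin.prod_univ_eq_prod_range (fun j => coeff (R := ℚ) (l j) f)]
    apply Finset.prod_congr rfl
    intro i _
    have hval : ((((l (i:ℕ) / 2 : ℕ) : Fin (m+1))) : ℕ) = l (i:ℕ) / 2 := by
      apply Fin.val_cast_of_lt
      have := hle (i:ℕ) (mem_range.mpr i.isLt)
      omega
    rw [coeff_f]
    obtain ⟨hev, hne⟩ := hgood (i:ℕ) (mem_range.mpr i.isLt)
    rw [if_pos ⟨hev, hne⟩]
    have h2 : 2 * ((((l (i:ℕ) / 2 : ℕ) : Fin (m+1))) : ℕ) = l (i:ℕ) := by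
      rw [hval]
      obtain ⟨t, ht⟩ := hev
      omega
    rw [h2]

lemma cmk_cast (m k : ℕ) :
    (cmk m k : ℚ) = (m.factorial : ℚ) *
      ∑ p ∈ S m k, ∏ i, (1:ℚ) / (((2 * (p i : ℕ)).factorial : ℕ) : ℚ) := by
  rw [cmk, Finset.mul_sum, Nat.cast_sum]
  refine Finset.sum_congr rfl fun p hp => ?_
  have hsum : 2 * (∑ i, (p i : ℕ)) = m := (Finset.mem_filter.mp hp).2.2
  have hdvd : (∏ i, (2 * (p i : ℕ)).factorial) ∣ m.factorial := by
    have h := Nat.prod_factorial_dvd_factorial_sum Finset.univ (fun i => 2 * (p i : ℕ))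
    rwa [← Finset.mul_sum, hsum] at h
  rw [Nat.cast_div hdvd (by positivity)]
  rw [Nat.cast_prod]
  rw [div_eq_mul_inv, ← Finset.prod_inv_distrib]
  congr 1
  exact Finset.prod_congr rfl fun i _ => (one_div _).symm

lemma cmk_big_zero {m k : ℕ} (h : m < 2*k) : cmk m k = 0 := by
  rw [cmk]
  convert Finset.sum_empty
  rw [Finset.filter_eq_empty_iff]
  rintro p - ⟨h1, h2⟩
  have : k ≤ ∑ i, (p i : ℕ) := by
    calc k = ∑ _i : Fin k, 1 := by simp
      _ ≤ ∑ i, (p i : ℕ) := Finset.sum_le_sum (fun i _ => h1 i)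
  omega

lemma cmk_zero {m : ℕ} (h : m ≠ 0) : cmk m 0 = 0 := by
  rw [cmk]
  convert Finset.sum_empty
  rw [Finset.filter_eq_empty_iff]
  rintro p - ⟨h1, h2⟩
  simp at h2
  exact h h2.symm

lemma cmk_rec (m k : ℕ) :
    cmk (m+2) (k+1) = (k+1)*(2*k+1) * cmk m k + (k+1)^2 * cmk m (k+1) := by
  have h := gamma_rec m k
  rw [coeff_f_pow, coeff_f_pow, coeff_f_pow] at h
  have hm : ((m.factorial : ℚ)) ≠ 0 := by positivity
  have hfac : (((m+2).factorial : ℚ)) = ((m:ℚ)+2) * ((m:ℚ)+1) * (m.factorial:ℚ) := by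
    rw [Nat.factorial_succ, Nat.factorial_succ]
    push_cast
    ring
  have e1 := cmk_cast (m+2) (k+1)
  have e2 := cmk_cast m (k+1)
  have e3 := cmk_cast m k
  have key : (cmk (m+2) (k+1) : ℚ)
      = ((k:ℚ)+1)*(2*(k:ℚ)+1) * (cmk m k : ℚ) + ((k:ℚ)+1)^2 * (cmk m (k+1) : ℚ) := by
    rw [e1, e2, e3, hfac]
    have h' := congrArg (fun z => (m.factorial : ℚ) * z) h
    push_cast at h' ⊢
    linear_combination h'
  exact_mod_cast key

def B (m k : ℕ) : ℝ := 2^k * (cmk m k : ℝ) / ((2*k).factorial : ℝ)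

def Q (k : ℕ) (x : ℝ) : ℝ := x^2 * ∏ l ∈ Icc 1 (k-1), (x^2 - (l:ℝ)^2)

lemma cmk_two_one : cmk 2 1 = 1 := by decide

lemma B_rec (m j : ℕ) :
    B (m+2) (j+1) = B m j + ((j:ℝ)+1)^2 * B m (j+1) := by
  have h := cmk_rec m j
  rw [B, B, B, h]
  have h2 : (2*(j+1)).factorial = (2*j+2) * ((2*j+1) * (2*j).factorial) := by
    rw [show 2*(j+1) = (2*j+1)+1 from by ring, Nat.factorial_succ, Nat.factorial_succ]
  rw [h2]
  have hj1 : ((2*j).factorial : ℝ) ≠ 0 := by positivity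
  push_cast
  field_simp
  ring

lemma Q_succ (j : ℕ) (x : ℝ) : Q (j+2) x = (x^2 - ((j:ℝ)+1)^2) * Q (j+1) x := by
  rw [Q, Q]
  have h1 : (j+2) - 1 = (j+1-1) + 1 := by omega
  rw [h1, Finset.prod_Icc_succ_top (by omega : 1 ≤ (j+1-1)+1)]
  have h2 : ((j+1-1:ℕ)+1 : ℕ) = j+1 := by omega
  rw [h2]
  push_cast
  ring

lemma key (M : ℕ) (hM : 1 ≤ M) (x : ℝ) :
    ∑ j ∈ range M, B (2*M) (j+1) * Q (j+1) x = x^(2*M) := by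
  induction M with
  | zero => omega
  | succ M ih =>
    rcases Nat.eq_zero_or_pos M with rfl | hMpos
    · rw [Finset.sum_range_one]
      rw [show 2*1 = 2 from rfl, B, cmk_two_one, Q]
      norm_num [Nat.factorial]
    · have step : ∀ j, B (2*(M+1)) (j+1) = B (2*M) j + ((j:ℝ)+1)^2 * B (2*M) (j+1) := by
        intro j
        rw [show 2*(M+1) = 2*M+2 from by ring]
        exact B_rec (2*M) j
      calc ∑ j ∈ range (M+1), B (2*(M+1)) (j+1) * Q (j+1) x
          = ∑ j ∈ range (M+1), (B (2*M) j * Q (j+1) x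
              + ((j:ℝ)+1)^2 * B (2*M) (j+1) * Q (j+1) x) := by
            refine Finset.sum_congr rfl fun j _ => ?_
            rw [step j]
            ring
        _ = (∑ j ∈ range (M+1), B (2*M) j * Q (j+1) x)
            + ∑ j ∈ range (M+1), ((j:ℝ)+1)^2 * B (2*M) (j+1) * Q (j+1) x := by
            rw [Finset.sum_add_distrib]
        _ = (∑ j ∈ range M, B (2*M) (j+1) * Q (j+2) x)
            + ∑ j ∈ range M, ((j:ℝ)+1)^2 * B (2*M) (j+1) * Q (j+1) x := by
            congr 1
            · rw [Finset.sum_range_succ']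
              have h0 : B (2*M) 0 = 0 := by
                rw [B, cmk_zero (by omega)]
                norm_num
              rw [h0]
              simp
            · rw [Finset.sum_range_succ]
              have h0 : B (2*M) (M+1) = 0 := by
                rw [B, cmk_big_zero (by omega)]
                norm_num
              rw [h0]
              simp
        _ = ∑ j ∈ range M, B (2*M) (j+1) * (x^2 * Q (j+1) x) := by
            rw [← Finset.sum_add_distrib]
            refine Finset.sum_congr rfl fun j _ => ?_
            rw [Q_succ]
            ring
        _ = x^2 * ∑ j ∈ range M, B (2*M) (j+1) * Q (j+1) x := by
            rw [Finset.mul_sum]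
            refine Finset.sum_congr rfl fun j _ => ?_
            ring
        _ = x^(2*(M+1)) := by
            rw [ih hMpos]
            rw [← pow_add]
            congr 1
            ring

lemma choose_id (j : ℕ) :
    2*(2*j+1) * ((2*j).choose j) = (j+1) * ((2*j+2).choose (j+1)) := by
  apply Nat.eq_of_mul_eq_mul_left (show 0 < j+1 by omega)
  have h1 : (2*j+1+1) * ((2*j+1).choose j) = (2*j+2).choose (j+1) * (j+1) :=
    Nat.add_one_mul_choose_eq (2*j+1) j
  have h2 : (2*j+1) * ((2*j).choose j) = (2*j+1).choose (j+1) * (j+1) :=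
    Nat.add_one_mul_choose_eq (2*j) j
  have h3 : (2*j+1).choose j = (2*j+1).choose (j+1) := by
    rw [← Nat.choose_symm (by omega : j ≤ 2*j+1)]
    congr 1
    omega
  rw [h3] at h1
  calc (j+1) * (2*(2*j+1) * ((2*j).choose j))
      = 2 * ((2*j+1) * ((2*j).choose j)) * (j+1) := by ring
    _ = 2 * ((2*j+1).choose (j+1) * (j+1)) * (j+1) := by rw [h2]
    _ = ((2*j+1+1) * ((2*j+1).choose (j+1))) * (j+1) := by ring
    _ = ((2*j+2).choose (j+1) * (j+1)) * (j+1) := by rw [h1]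
    _ = (j+1) * ((j+1) * (2*j+2).choose (j+1)) := by ring

lemma fact_succ_2k (k : ℕ) (hk : 1 ≤ k) :
    (2*k).factorial = (2*k) * (2*k-1).factorial := by
  have h : 2*k = (2*k-1)+1 := by omega
  calc (2*k).factorial = ((2*k-1)+1).factorial := by rw [← h]
    _ = ((2*k-1)+1) * (2*k-1).factorial := Nat.factorial_succ _
    _ = (2*k) * (2*k-1).factorial := by rw [← h]

lemma point (n M : ℕ) (hn : n = 2*M+1) (hM : 1 ≤ M) (r : ℕ) :
    ∑ k ∈ Icc 1 M, ((2:ℝ)^k * (cmk (2*M) k : ℝ) / (((2*k-1).factorial : ℝ) * (k:ℝ))) *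
      ((∏ l ∈ Icc 1 (k-1), (((r:ℝ)+1)^2 - (l:ℝ)^2)) / ((r:ℝ)+1)^(2*n-3))
    = 2 * (1/((r:ℝ)+1)^n) := by
  set x : ℝ := (r:ℝ)+1 with hxdef
  have hx : 0 < x := by positivity
  have hstep : ∀ k ∈ Icc 1 M,
      ((2:ℝ)^k * (cmk (2*M) k : ℝ) / (((2*k-1).factorial : ℝ) * (k:ℝ))) *
        ((∏ l ∈ Icc 1 (k-1), (x^2 - (l:ℝ)^2)) / x^(2*n-3))
      = (B (2*M) k * Q k x) * (2 / x^(2*n-1)) := by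
    intro k hk
    rw [mem_Icc] at hk
    have hk1 : 1 ≤ k := hk.1
    have hfac : ((2*k).factorial : ℝ) = (2*k) * ((2*k-1).factorial : ℝ) := by
      rw [fact_succ_2k k hk1]; push_cast; ring
    have hxpow : x^(2*n-1) = x^(2*n-3) * x^2 := by
      rw [← pow_add]
      congr 1
      omega
    rw [B, Q, hfac, hxpow]
    have hf1 : ((2*k-1).factorial : ℝ) ≠ 0 := by positivity
    have hk0 : (k:ℝ) ≠ 0 := by positivity
    have hx0 : x ≠ 0 := ne_of_gt hx
    field_simp
  rw [Finset.sum_congr rfl hstep, ← Finset.sum_mul]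
  have hIcc : ∑ k ∈ Icc 1 M, B (2*M) k * Q k x = ∑ j ∈ range M, B (2*M) (j+1) * Q (j+1) x := by
    rw [show Icc 1 M = Ico 1 (M+1) from by rw [Finset.Ico_add_one_right_eq_Icc], Finset.sum_Ico_eq_sum_range]
    apply Finset.sum_congr (by congr 1)
    intro j _
    rw [add_comm 1 j]
  rw [hIcc, key M hM x]
  have hxn : x^(2*n-1) = x^(2*M) * x^n := by
    rw [← pow_add]
    congr 1
    omega
  rw [hxn]
  have h2M : x^(2*M) ≠ 0 := by positivity
  have hxn0 : x^n ≠ 0 := by positivity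
  field_simp

lemma summ (n M k : ℕ) (hn : n = 2*M+1) (hM : 1 ≤ M) (hk : k ∈ Icc 1 M) :
    Summable fun r : ℕ =>
      (∏ l ∈ Finset.Icc 1 (k - 1), (((r : ℝ) + 1) ^ 2 - (l : ℝ) ^ 2)) /
        ((r : ℝ) + 1) ^ (2 * n - 3) := by
  have base : Summable (fun r : ℕ => 1/((r:ℝ)+1)^2) := by
    have h2 : Summable (fun r : ℕ => 1/((r:ℝ))^2) := Real.summable_one_div_nat_pow.mpr one_lt_two
    have h3 := (_root_.summable_nat_add_iff (f := fun r : ℕ => 1/((r:ℝ))^2) 1).mpr h2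
    refine h3.congr fun r => ?_
    push_cast
    ring
  rw [mem_Icc] at hk
  set F : ℝ := (((k-1).factorial : ℕ) : ℝ) with hF
  have hF0 : 0 < F := by positivity
  apply Summable.of_norm_bounded (g := fun r : ℕ => F^2 * (1/((r:ℝ)+1)^2)) (base.mul_left _)
  intro r
  set x : ℝ := (r:ℝ)+1 with hxdef
  have hx1 : (1:ℝ) ≤ x := by
    rw [hxdef]
    have : (0:ℝ) ≤ (r:ℝ) := Nat.cast_nonneg r
    linarith
  have hx : (0:ℝ) < x := by linarith
  have hxp : (0:ℝ) < x^(2*n-3) := pow_pos hx _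
  have hnum : |∏ l ∈ Icc 1 (k-1), (x^2 - (l:ℝ)^2)| ≤ x^(2*(k-1)) * F^2 := by
    calc |∏ l ∈ Icc 1 (k-1), (x^2 - (l:ℝ)^2)|
        = ∏ l ∈ Icc 1 (k-1), |x^2 - (l:ℝ)^2| := Finset.abs_prod _ _
      _ ≤ ∏ l ∈ Icc 1 (k-1), x^2 * (l:ℝ)^2 := by
          apply Finset.prod_le_prod (fun l _ => abs_nonneg _)
          intro l hl
          rw [mem_Icc] at hl
          have hl1 : (1:ℝ) ≤ (l:ℝ) := by exact_mod_cast hl.1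
          have hx2 : (1:ℝ) ≤ x^2 := by nlinarith
          have hl2 : (1:ℝ) ≤ (l:ℝ)^2 := by nlinarith
          rw [abs_le]
          constructor
          · nlinarith [mul_nonneg (by linarith : (0:ℝ) ≤ x^2-1) (by positivity : (0:ℝ) ≤ (l:ℝ)^2)]
          · nlinarith [mul_nonneg (by linarith : (0:ℝ) ≤ (l:ℝ)^2-1) (by positivity : (0:ℝ) ≤ x^2)]
      _ = (x^2)^((Icc 1 (k-1)).card) * (∏ l ∈ Icc 1 (k-1), (l:ℝ))^2 := by
          rw [Finset.prod_mul_distrib, Finset.prod_const, Finset.prod_pow]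
      _ = x^(2*(k-1)) * F^2 := by
          have hc : (Icc 1 (k-1)).card = k-1 := by
            rw [Nat.card_Icc]
            omega
          have hp : ∏ l ∈ Icc 1 (k-1), (l:ℝ) = F := by
            rw [hF, ← Nat.cast_prod]
            congr 1
            rw [show Icc 1 (k-1) = Ico 1 ((k-1)+1) from by rw [Finset.Ico_add_one_right_eq_Icc]]
            exact Finset.prod_Ico_id_eq_factorial (k-1)
          rw [hc, hp, ← pow_mul]
  rw [Real.norm_eq_abs, abs_div, abs_of_pos hxp, mul_one_div, div_le_div_iff₀ hxp (by positivity)]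
  calc |∏ l ∈ Icc 1 (k-1), (x^2 - (l:ℝ)^2)| * x^2
      ≤ (x^(2*(k-1)) * F^2) * x^2 := by
        apply mul_le_mul_of_nonneg_right hnum (by positivity)
    _ = F^2 * (x^(2*(k-1)) * x^2) := by ring
    _ = F^2 * x^(2*k) := by
        rw [← pow_add]
        congr 2
        omega
    _ ≤ F^2 * x^(2*n-3) := by
        apply mul_le_mul_of_nonneg_left _ (by positivity)
        apply pow_le_pow_right₀ hx1
        omega

end Stmt18aux

open Finset Stmt18aux in
/-- For odd `n ≥ 3` and `m = n-1`: each series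
`Σ_{r≥1} (∏_{ℓ=1}^{k-1}(r²-ℓ²))/r^{2n-3}` converges, and
`(2n-1)·binom(2n-2,n-1)·Σ_{k=1}^{m/2} (2^k c_{m,k}/((2k-1)!·k))·Σ_{r≥1}(∏(r²-ℓ²))/r^{2n-3}
 = n·binom(2n,n)·Σ_{r≥1} 1/rⁿ`. -/
theorem stmt_18 (n : ℕ) (hn : 3 ≤ n) (hodd : Odd n) :
    (∀ k ∈ Finset.Icc 1 ((n - 1) / 2),
      Summable fun r : ℕ =>
        (∏ l ∈ Finset.Icc 1 (k - 1), (((r : ℝ) + 1) ^ 2 - (l : ℝ) ^ 2)) /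
          ((r : ℝ) + 1) ^ (2 * n - 3))
    ∧ ((2 * n - 1 : ℝ) * ((2 * n - 2).choose (n - 1) : ℝ) *
        ∑ k ∈ Finset.Icc 1 ((n - 1) / 2),
          ((2 : ℝ) ^ k * (cmk (n - 1) k : ℝ) / (((2 * k - 1).factorial : ℝ) * (k : ℝ))) *
            ∑' r : ℕ,
              (∏ l ∈ Finset.Icc 1 (k - 1), (((r : ℝ) + 1) ^ 2 - (l : ℝ) ^ 2)) /
                ((r : ℝ) + 1) ^ (2 * n - 3)
      = (n : ℝ) * ((2 * n).choose n : ℝ) * ∑' r : ℕ, 1 / ((r : ℝ) + 1) ^ n) := by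
  obtain ⟨M, hM⟩ := hodd
  have hM1 : 1 ≤ M := by omega
  have e0 : n - 1 = 2*M := by omega
  have e0' : (2*M)/2 = M := by omega
  constructor
  · intro k hk
    rw [e0, e0'] at hk
    exact summ n M k hM hM1 hk
  · rw [e0, e0']
    have hs1 : ∀ k ∈ Icc 1 M,
        ((2 : ℝ) ^ k * (cmk (2*M) k : ℝ) / (((2 * k - 1).factorial : ℝ) * (k : ℝ))) *
          ∑' r : ℕ, (∏ l ∈ Icc 1 (k - 1), (((r : ℝ) + 1) ^ 2 - (l : ℝ) ^ 2)) /
              ((r : ℝ) + 1) ^ (2 * n - 3)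
        = ∑' r : ℕ, ((2 : ℝ) ^ k * (cmk (2*M) k : ℝ) / (((2 * k - 1).factorial : ℝ) * (k : ℝ))) *
            ((∏ l ∈ Icc 1 (k - 1), (((r : ℝ) + 1) ^ 2 - (l : ℝ) ^ 2)) /
              ((r : ℝ) + 1) ^ (2 * n - 3)) := by
      intro k _
      exact tsum_mul_left.symm
    rw [Finset.sum_congr rfl hs1]
    rw [← Summable.tsum_finsetSum (fun k hk => Summable.mul_left _ (summ n M k hM hM1 hk))]
    rw [tsum_congr (point n M hM hM1)]
    rw [tsum_mul_left]
    have hch := choose_id (2*M)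
    have ec1 : 2*n-2 = 2*(2*M) := by omega
    have ec2 : n-1 = 2*M := e0
    have ec3 : 2*n = 2*(2*M)+2 := by omega
    have ecn : n = 2*M+1 := hM
    rw [ec1, ec3, ecn]
    have hcast : (2:ℝ)*(2*(2*M:ℕ)+1) * ((2*(2*M)).choose (2*M) : ℝ)
        = ((2*M:ℕ)+1) * (((2*(2*M)+2).choose (2*M+1)) : ℝ) := by
      exact_mod_cast congrArg (fun z : ℕ => (z:ℝ)) hch
    push_cast at hcast ⊢
    linear_combination (∑' r : ℕ, 1 / ((r : ℝ) + 1) ^ (2*M+1)) * hcast
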